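/- arXiv:1102.4291 — 3 statements merged into one kernel-verified Lean document; each statement's English description precedes it below -/
import Mathlib

section
/- The point (−722, 34656) lies on the elliptic curve y² = x³ + 1292x² − 1251948x over ℚ, and this point has infinite order. -/
/-- The `π/3`-congruent number curve for `n = 646`: `y² = x³ + 1292x² − 1251948x`. -/
def W : WeierstrassCurve ℚ := ⟨0, 1292, 0, -1251948, 0⟩

namespace CongruentAux

open WeierstrassCurve WeierstrassCurve.Affine

lemma Wa1 : W.a₁ = 0 := rfl
lemma Wa2 : W.a₂ = 1292 := rfl
lemma Wa3 : W.a₃ = 0 := rfl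
lemma Wa4 : W.a₄ = -1251948 := rfl
lemma Wa6 : W.a₆ = 0 := rfl

lemma equation_W {x y : ℚ} :
    W.toAffine.Equation x y ↔ y ^ 2 = x ^ 3 + 1292 * x ^ 2 - 1251948 * x := by
  rw [WeierstrassCurve.Affine.equation_iff, Wa1, Wa2, Wa3, Wa4, Wa6]
  constructor <;> intro h <;> linear_combination h

lemma negY_W (x y : ℚ) : W.toAffine.negY x y = -y := by
  rw [WeierstrassCurve.Affine.negY, Wa1, Wa3]; ring

lemma addX_W (x₁ x₂ L : ℚ) :
    W.toAffine.addX x₁ x₂ L = L ^ 2 - 1292 - x₁ - x₂ := by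
  rw [WeierstrassCurve.Affine.addX, Wa1, Wa2]; ring

lemma hW : W.toAffine.Nonsingular (-722) 34656 := by
  rw [WeierstrassCurve.Affine.nonsingular_iff, WeierstrassCurve.Affine.equation_iff,
    Wa1, Wa2, Wa3, Wa4, Wa6]
  norm_num

/-- The key algebraic identities for the addition law on `W`. -/
lemma keys {x₁ x₂ y₁ y₂ : ℚ} (h₁ : y₁ ^ 2 = x₁ ^ 3 + 1292 * x₁ ^ 2 - 1251948 * x₁)
    (h₂ : y₂ ^ 2 = x₂ ^ 3 + 1292 * x₂ ^ 2 - 1251948 * x₂)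
    (hxy : x₁ = x₂ → y₁ ≠ -y₂) :
    x₁ * x₂ * (W.toAffine.addX x₁ x₂ (W.toAffine.slope x₁ x₂ y₁ y₂)) =
      (y₁ - (W.toAffine.slope x₁ x₂ y₁ y₂) * x₁) ^ 2 ∧
    x₁ * x₂ + (W.toAffine.addX x₁ x₂ (W.toAffine.slope x₁ x₂ y₁ y₂)) * (x₁ + x₂) =
      -1251948 - 2 * (W.toAffine.slope x₁ x₂ y₁ y₂) *
        (y₁ - (W.toAffine.slope x₁ x₂ y₁ y₂) * x₁) ∧
    y₂ - (W.toAffine.slope x₁ x₂ y₁ y₂) * x₂ =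
      y₁ - (W.toAffine.slope x₁ x₂ y₁ y₂) * x₁ := by
  rcases eq_or_ne x₁ x₂ with hx | hx
  · subst hx
    have hy : y₁ ≠ -y₂ := hxy rfl
    have hyy : y₁ = y₂ := by
      have h3 : (y₁ - y₂) * (y₁ + y₂) = 0 := by linear_combination h₁ - h₂
      rcases mul_eq_zero.mp h3 with h4 | h4
      · linarith [sub_eq_zero.mp h4]
      · exact absurd (by linarith) hy
    subst hyy
    have hy0 : y₁ ≠ 0 := fun h0 => hy (by rw [h0]; ring)
    have hL : W.toAffine.slope x₁ x₁ y₁ y₁ = (3*x₁^2 + 2584*x₁ - 1251948)/(2*y₁) := by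
      rw [WeierstrassCurve.Affine.slope_of_Y_ne rfl (by rw [negY_W]; exact hy), negY_W,
        Wa1, Wa2, Wa4]
      ring
    refine ⟨?_, ?_, ?_⟩
    · rw [addX_W, hL]
      field_simp
      linear_combination (-4*y₁^2) * h₁
    · rw [addX_W, hL]
      field_simp
      linear_combination (0:ℚ) * h₁
    · rfl
  · have hd : x₁ - x₂ ≠ 0 := sub_ne_zero.mpr hx
    have hL : W.toAffine.slope x₁ x₂ y₁ y₂ = (y₁ - y₂)/(x₁ - x₂) :=
      WeierstrassCurve.Affine.slope_of_X_ne hx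
    refine ⟨?_, ?_, ?_⟩
    · rw [addX_W, hL]
      field_simp
      linear_combination (x₂*(x₁-x₂))*h₁ - (x₁*(x₁-x₂))*h₂
    · rw [addX_W, hL]
      field_simp
      linear_combination (x₁-x₂)*h₁ - (x₁-x₂)*h₂
    · rw [hL]
      field_simp
      ring

/-! ### The square-class invariant -/

/-- The target group: sign, 2-adic valuation mod 2, 3-adic valuation mod 2. -/
abbrev T := ZMod 2 × ZMod 2 × ZMod 2

noncomputable def chi (q : ℚ) : T :=
  (if q < 0 then 1 else 0, ((padicValRat 2 q : ℤ) : ZMod 2), ((padicValRat 3 q : ℤ) : ZMod 2))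

lemma T_add_self (v : T) : v + v = 0 := by
  have h : ∀ a : ZMod 2, a + a = 0 := by decide
  exact Prod.ext (h _) (Prod.ext (h _) (h _))

lemma chi_mul {a b : ℚ} (ha : a ≠ 0) (hb : b ≠ 0) : chi (a * b) = chi a + chi b := by
  unfold chi
  refine Prod.ext ?_ (Prod.ext ?_ ?_)
  · show (if a * b < 0 then (1 : ZMod 2) else 0) =
      (if a < 0 then (1 : ZMod 2) else 0) + (if b < 0 then (1 : ZMod 2) else 0)
    rcases lt_or_gt_of_ne ha with ha' | ha' <;> rcases lt_or_gt_of_ne hb with hb' | hb'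
    · rw [if_neg (by nlinarith), if_pos ha', if_pos hb']; decide
    · rw [if_pos (by exact mul_neg_of_neg_of_pos ha' hb'), if_pos ha', if_neg (by linarith)]
      decide
    · rw [if_pos (by exact mul_neg_of_pos_of_neg ha' hb'), if_neg (by linarith), if_pos hb']
      decide
    · rw [if_neg (by nlinarith), if_neg (by linarith), if_neg (by linarith)]; decide
  · show ((padicValRat 2 (a*b) : ℤ) : ZMod 2) =
      ((padicValRat 2 a : ℤ) : ZMod 2) + ((padicValRat 2 b : ℤ) : ZMod 2)
    rw [padicValRat.mul ha hb]; push_cast; ring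
  · show ((padicValRat 3 (a*b) : ℤ) : ZMod 2) =
      ((padicValRat 3 a : ℤ) : ZMod 2) + ((padicValRat 3 b : ℤ) : ZMod 2)
    rw [padicValRat.mul ha hb]; push_cast; ring

lemma chi_sq {a : ℚ} (ha : a ≠ 0) : chi (a * a) = 0 := by
  rw [chi_mul ha ha]; exact T_add_self _

lemma chi_neg_one : chi (-1) = (1, 0, 0) := by
  unfold chi
  rw [if_pos (by norm_num)]
  have h2 : padicValRat 2 (-1) = 0 := by rw [padicValRat.neg, padicValRat.one]
  have h3 : padicValRat 3 (-1) = 0 := by rw [padicValRat.neg, padicValRat.one]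
  rw [h2, h3]; rfl

lemma chi_two : chi 2 = (0, 1, 0) := by
  unfold chi
  rw [if_neg (by norm_num)]
  have h2 : padicValRat 2 2 = 1 := by
    have := padicValRat.self (p := 2) (by norm_num)
    simpa using this
  have h3 : padicValRat 3 2 = 0 := by
    have h := padicValRat.of_nat (p := 3) (n := 2)
    norm_num at h
    rw [h, padicValNat.eq_zero_of_not_dvd (by decide)]; rfl
  rw [h2, h3]; rfl

lemma chi_three : chi 3 = (0, 0, 1) := by
  unfold chi
  rw [if_neg (by norm_num)]
  have h3 : padicValRat 3 3 = 1 := by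
    have := padicValRat.self (p := 3) (by norm_num)
    simpa using this
  have h2 : padicValRat 2 3 = 0 := by
    have h := padicValRat.of_nat (p := 2) (n := 3)
    norm_num at h
    rw [h, padicValNat.eq_zero_of_not_dvd (by decide)]; rfl
  rw [h2, h3]; rfl

lemma chi_coprime (n : ℕ) (h2 : ¬ 2 ∣ n) (h3 : ¬ 3 ∣ n) : chi n = 0 := by
  unfold chi
  have hn : (0:ℚ) ≤ n := Nat.cast_nonneg n
  rw [if_neg (by linarith)]
  have g2 : padicValRat 2 n = 0 := by
    have h := padicValRat.of_nat (p := 2) (n := n)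
    rw [h, padicValNat.eq_zero_of_not_dvd h2]; rfl
  have g3 : padicValRat 3 n = 0 := by
    have h := padicValRat.of_nat (p := 3) (n := n)
    rw [h, padicValNat.eq_zero_of_not_dvd h3]; rfl
  rw [g2, g3]; rfl

lemma chi_17 : chi 17 = 0 := by
  have := chi_coprime 17 (by decide) (by decide); norm_num at this ⊢; exact this

lemma chi_19 : chi 19 = 0 := by
  have := chi_coprime 19 (by decide) (by decide); norm_num at this ⊢; exact this

lemma chi_neg722 : chi (-722) = (1, 1, 0) := by
  have h : (-722 : ℚ) = (-1) * (2 * (19 * 19)) := by norm_num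
  rw [h, chi_mul (by norm_num) (by norm_num), chi_mul (by norm_num) (by norm_num),
    chi_sq (by norm_num), chi_neg_one, chi_two]
  decide

lemma chi_B : chi (-1251948) = (1, 0, 1) := by
  have h : (-1251948 : ℚ) = (-1) * (3 * (646 * 646)) := by norm_num
  rw [h, chi_mul (by norm_num) (by norm_num), chi_mul (by norm_num) (by norm_num),
    chi_sq (by norm_num), chi_neg_one, chi_three]
  decide

lemma chi_646 : chi 646 = (0, 1, 0) := by
  have h : (646 : ℚ) = 2 * (17 * 19) := by norm_num
  rw [h, chi_mul (by norm_num) (by norm_num), chi_mul (by norm_num) (by norm_num),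
    chi_two, chi_17, chi_19]
  decide

lemma chi_neg1938 : chi (-1938) = (1, 1, 1) := by
  have h : (-1938 : ℚ) = (-1) * (2 * (3 * (17 * 19))) := by norm_num
  rw [h, chi_mul (by norm_num) (by norm_num), chi_mul (by norm_num) (by norm_num),
    chi_mul (by norm_num) (by norm_num), chi_mul (by norm_num) (by norm_num),
    chi_neg_one, chi_two, chi_three, chi_17, chi_19]
  decide

/-! ### The descent map `f` -/

noncomputable def f : W.toAffine.Point → T
  | .zero => 0
  | @WeierstrassCurve.Affine.Point.some _ _ _ x _ _ => if x = 0 then (1, 0, 1) else chi x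

lemma f_zero : f 0 = 0 := rfl

lemma f_some {x y : ℚ} (h : W.toAffine.Nonsingular x y) :
    f (.some _ _ h) = if x = 0 then (1, 0, 1) else chi x := rfl

lemma solveT : ∀ a b c : T, a + b = c → b = c + a := by decide

lemma solveT' : ∀ a b c : T, a + b + c = 0 → c = a + b := by decide

set_option maxHeartbeats 1000000 in
lemma f_add (P Q : W.toAffine.Point) : f (P + Q) = f P + f Q := by
  rcases P with _ | @⟨x₁, y₁, h₁⟩
  · show f (0 + Q) = f 0 + f Q
    rw [zero_add, f_zero, zero_add]
  rcases Q with _ | @⟨x₂, y₂, h₂⟩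
  · show f (_ + 0) = _ + f 0
    rw [add_zero, f_zero, add_zero]
  by_cases hy : x₁ = x₂ ∧ y₁ = W.toAffine.negY x₂ y₂
  · rw [WeierstrassCurve.Affine.Point.add_of_Y_eq hy.1 hy.2, f_zero, f_some, f_some, hy.1]
    exact (T_add_self _).symm
  · have hxy : x₁ = x₂ → y₁ ≠ W.toAffine.negY x₂ y₂ := fun hx hy' => hy ⟨hx, hy'⟩
    rw [WeierstrassCurve.Affine.Point.add_some (fun h => hxy h.1 h.2)]
    have e₁ : y₁ ^ 2 = x₁ ^ 3 + 1292 * x₁ ^ 2 - 1251948 * x₁ := equation_W.mp h₁.1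
    have e₂ : y₂ ^ 2 = x₂ ^ 3 + 1292 * x₂ ^ 2 - 1251948 * x₂ := equation_W.mp h₂.1
    have hxy' : x₁ = x₂ → y₁ ≠ -y₂ := by
      intro hx
      have := hxy hx
      rwa [negY_W] at this
    obtain ⟨k1, k4, k5⟩ := keys e₁ e₂ hxy'
    rw [f_some, f_some, f_some]
    generalize hx₃def : W.toAffine.addX x₁ x₂ (W.toAffine.slope x₁ x₂ y₁ y₂) = x₃ at k1 k4 ⊢
    generalize hLdef : W.toAffine.slope x₁ x₂ y₁ y₂ = L at k1 k4 k5 ⊢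
    by_cases hx₁ : x₁ = 0
    · -- P = (0,0)
      have hy₁ : y₁ = 0 := by
        have : y₁ ^ 2 = 0 := by rw [e₁, hx₁]; ring
        exact pow_eq_zero_iff (by norm_num) |>.mp this
      have hx₂ : x₂ ≠ 0 := by
        intro hx₂0
        have hy₂ : y₂ = 0 := by
          have : y₂ ^ 2 = 0 := by rw [e₂, hx₂0]; ring
          exact pow_eq_zero_iff (by norm_num) |>.mp this
        exact hxy' (hx₁.trans hx₂0.symm) (by rw [hy₁, hy₂]; ring)
      have hnu : y₁ - L * x₁ = 0 := by rw [hy₁, hx₁]; ring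
      have hprod : x₂ * x₃ = -1251948 := by
        rw [hnu] at k4
        rw [hx₁] at k4
        linear_combination k4
      have hx₃ : x₃ ≠ 0 := by
        intro h0; rw [h0] at hprod; norm_num at hprod
      rw [if_pos hx₁, if_neg hx₂, if_neg hx₃]
      have : chi x₂ + chi x₃ = (1, 0, 1) := by
        rw [← chi_mul hx₂ hx₃, hprod]; exact chi_B
      exact solveT _ _ _ this
    · by_cases hx₂ : x₂ = 0
      · -- Q = (0,0)
        have hy₂ : y₂ = 0 := by
          have : y₂ ^ 2 = 0 := by rw [e₂, hx₂]; ring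
          exact pow_eq_zero_iff (by norm_num) |>.mp this
        have hnu : y₁ - L * x₁ = 0 := by rw [← k5, hy₂, hx₂]; ring
        have hprod : x₁ * x₃ = -1251948 := by
          rw [hnu] at k4
          rw [hx₂] at k4
          linear_combination k4
        have hx₃ : x₃ ≠ 0 := by
          intro h0; rw [h0] at hprod; norm_num at hprod
        rw [if_neg hx₁, if_pos hx₂, if_neg hx₃]
        have hc : chi x₁ + chi x₃ = (1, 0, 1) := by
          rw [← chi_mul hx₁ hx₃, hprod]; exact chi_B
        rw [solveT _ _ _ hc, add_comm]
      · by_cases hx₃ : x₃ = 0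
        · -- result is (0,0)
          have hnu : y₁ - L * x₁ = 0 := by
            have : (y₁ - L * x₁) ^ 2 = 0 := by rw [← k1, hx₃]; ring
            exact pow_eq_zero_iff (by norm_num) |>.mp this
          have hprod : x₁ * x₂ = -1251948 := by
            rw [hnu] at k4
            rw [hx₃] at k4
            linear_combination k4
          rw [if_pos hx₃, if_neg hx₁, if_neg hx₂]
          rw [← chi_mul hx₁ hx₂, hprod, chi_B]
        · -- generic case
          rw [if_neg hx₁, if_neg hx₂, if_neg hx₃]
          have hnu : y₁ - L * x₁ ≠ 0 := by
            intro h0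
            apply hx₃
            have hp : x₁ * x₂ * x₃ = 0 := by rw [k1, h0]; ring
            rcases mul_eq_zero.mp hp with h | h
            · rcases mul_eq_zero.mp h with h | h
              · exact absurd h hx₁
              · exact absurd h hx₂
            · exact h
          have hc : chi x₁ + chi x₂ + chi x₃ = 0 := by
            rw [← chi_mul hx₁ hx₂, ← chi_mul (mul_ne_zero hx₁ hx₂) hx₃, k1, pow_two,
              chi_sq hnu]
          exact (solveT' _ _ _ hc)

noncomputable def F : W.toAffine.Point →+ T := AddMonoidHom.mk' f f_add

lemma even_nsmul_T {t : ℕ} (ht : Even t) (v : T) : t • v = 0 := by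
  obtain ⟨c, rfl⟩ := ht
  rw [add_nsmul]; exact T_add_self _

lemma odd_nsmul_T {t : ℕ} (ht : Odd t) (v : T) : t • v = v := by
  obtain ⟨c, rfl⟩ := ht
  rw [add_nsmul, even_nsmul_T (even_two_mul c) v, zero_add, one_nsmul]

end CongruentAux

open CongruentAux WeierstrassCurve WeierstrassCurve.Affine in
/-- The point `(−722, 34656)` lies on `y² = x³ + 1292x² − 1251948x` and has
infinite order in the Mordell–Weil group. -/
theorem point_on_curve_infinite_order :
    ∃ h : W.toAffine.Nonsingular (-722) 34656,
      ∀ k : ℤ, k ≠ 0 → k • (WeierstrassCurve.Affine.Point.some _ _ h) ≠ 0 := by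
  refine ⟨hW, fun k hk hzero => ?_⟩
  set P : W.toAffine.Point := .some _ _ hW with hPdef
  have fP : f P = (1, 1, 0) := by
    rw [hPdef, f_some, if_neg (by norm_num)]
    exact chi_neg722
  -- a natural number multiple is zero
  have hn : (k.natAbs) • P = 0 := by
    have h1 : ((k.natAbs : ℤ)) • P = 0 := by
      rcases Int.natAbs_eq k with h | h
      · rw [← h]; exact hzero
      · rw [show ((k.natAbs : ℤ)) = -k by omega, neg_zsmul, hzero, neg_zero]
    rwa [natCast_zsmul] at h1
  have hnpos : 0 < k.natAbs := Int.natAbs_pos.mpr hk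
  have hfin : IsOfFinAddOrder P :=
    isOfFinAddOrder_iff_nsmul_eq_zero.mpr ⟨k.natAbs, hnpos, hn⟩
  set n₀ := addOrderOf P with hn₀def
  have hn₀pos : 0 < n₀ := hfin.addOrderOf_pos
  have hn₀zero : n₀ • P = 0 := addOrderOf_nsmul_eq_zero P
  rcases Nat.even_or_odd n₀ with he | ho
  · -- even order: get a nonzero 2-torsion point
    obtain ⟨t, ht⟩ := he
    have htpos : 0 < t := by omega
    set Q := t • P with hQdef
    have hQne : Q ≠ 0 := by
      intro h0
      have hdvd : n₀ ∣ t := addOrderOf_dvd_of_nsmul_eq_zero h0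
      have := Nat.le_of_dvd htpos hdvd
      omega
    have hQQ : Q + Q = 0 := by
      rw [hQdef, ← add_nsmul, ← ht]; exact hn₀zero
    have hfQ : f Q = t • f P := by
      rw [hQdef]
      exact F.map_nsmul t P
    -- Q is a nonzero 2-torsion point
    rcases Q with _ | @⟨x, y, hQ⟩
    · exact hQne rfl
    have hy0 : y = 0 := by
      by_cases hy : y = W.toAffine.negY x y
      · rw [negY_W] at hy; linarith
      · rw [WeierstrassCurve.Affine.Point.add_self_of_Y_ne hy] at hQQ
        exact absurd hQQ (WeierstrassCurve.Affine.Point.some_ne_zero _)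
    have he0 : x ^ 3 + 1292 * x ^ 2 - 1251948 * x = 0 := by
      have := equation_W.mp hQ.1
      rw [hy0] at this
      linarith [this]
    have hfact : x * ((x - 646) * (x + 1938)) = 0 := by linear_combination he0
    have hfQval : f (WeierstrassCurve.Affine.Point.some _ _ hQ) = (1, 0, 1) ∨
        f (WeierstrassCurve.Affine.Point.some _ _ hQ) = (0, 1, 0) ∨
        f (WeierstrassCurve.Affine.Point.some _ _ hQ) = (1, 1, 1) := by
      rw [f_some]
      rcases mul_eq_zero.mp hfact with h | h
      · left; rw [if_pos h]
      · rcases mul_eq_zero.mp h with h | h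
        · right; left
          have hx : x = 646 := by linarith [sub_eq_zero.mp h]
          rw [if_neg (by rw [hx]; norm_num), hx]
          exact chi_646
        · right; right
          have hx : x = -1938 := by linarith
          rw [if_neg (by rw [hx]; norm_num), hx]
          exact chi_neg1938
    have hsm : t • f P = 0 ∨ t • f P = (1, 1, 0) := by
      rcases Nat.even_or_odd t with h | h
      · left; exact even_nsmul_T h _
      · right; rw [odd_nsmul_T h, fP]
    rw [hfQ] at hfQval
    rcases hsm with h | h <;> rw [h] at hfQval <;> revert hfQval <;> decide
  · -- odd order
    have : f P = 0 := by
      have h1 : n₀ • f P = 0 := by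
        have h2 : F (n₀ • P) = n₀ • F P := F.map_nsmul n₀ P
        rw [hn₀zero, map_zero] at h2
        exact h2.symm
      rwa [odd_nsmul_T ho] at h1
    rw [fP] at this
    exact absurd this (by decide)
end

section
/- The Mordell–Weil rank of the elliptic curve y² = x³ + 1292x² − 1251948x over ℚ is at least 3; in particular the points (−722, 34656), (6137, 521645), (−1216, 40432) generate a subgroup of rank 3. -/
set_option linter.unusedSectionVars false
set_option maxHeartbeats 4000000

open WeierstrassCurve.Affine WeierstrassCurve.Affine.Point

noncomputable def chi (p : ℕ) (q : ℚ) : ZMod 2 := ((padicValRat p q : ℤ) : ZMod 2)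

noncomputable def phi (p : ℕ) (e : ℚ) : W.toAffine.Point → ZMod 2
  | .zero => 0
  | @WeierstrassCurve.Affine.Point.some _ _ _ x _ _ =>
      if x = e then chi p (3 * e ^ 2 + 2584 * e - 1251948) else chi p (x - e)

@[simp] lemma phi_zero (p : ℕ) (e : ℚ) : phi p e 0 = 0 := rfl

@[simp] lemma phi_some (p : ℕ) (e : ℚ) {x y : ℚ} (h : W.toAffine.Nonsingular x y) :
    phi p e (.some _ _ h) = if x = e then chi p (3 * e ^ 2 + 2584 * e - 1251948) else chi p (x - e) :=
  rfl

-- unfolding lemmas for the curve constants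
lemma Wa1 : W.toAffine.a₁ = 0 := rfl
lemma Wa2 : W.toAffine.a₂ = 1292 := rfl
lemma Wa3 : W.toAffine.a₃ = 0 := rfl
lemma Wa4 : W.toAffine.a₄ = -1251948 := rfl
lemma Wa6 : W.toAffine.a₆ = 0 := rfl

lemma negY_eq (x y : ℚ) : W.toAffine.negY x y = -y := by
  simp [WeierstrassCurve.Affine.negY, Wa1, Wa3]

lemma equation_W {x y : ℚ} (h : W.toAffine.Equation x y) :
    y ^ 2 = x ^ 3 + 1292 * x ^ 2 - 1251948 * x := by
  have := (W.toAffine.equation_iff x y).mp h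
  rw [Wa1, Wa2, Wa3, Wa4, Wa6] at this
  linarith

lemma addX_eq (x1 x2 L : ℚ) : W.toAffine.addX x1 x2 L = L ^ 2 - 1292 - x1 - x2 := by
  simp [WeierstrassCurve.Affine.addX, Wa1, Wa2]

variable {p : ℕ} [Fact p.Prime]

lemma chi_mul {q r : ℚ} (hq : q ≠ 0) (hr : r ≠ 0) : chi p (q * r) = chi p q + chi p r := by
  simp [chi, padicValRat.mul hq hr]

lemma chi_neg (q : ℚ) : chi p (-q) = chi p q := by simp [chi, padicValRat.neg]

lemma chi_sq {q : ℚ} (hq : q ≠ 0) : chi p (q ^ 2) = 0 := by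
  rw [chi, padicValRat.pow q]; push_cast; exact mul_eq_zero_of_left (by decide) _

lemma chi_self : chi p p = 1 := by
  simp [chi, padicValRat.self (Fact.out : p.Prime).one_lt]

lemma chi_int {z : ℤ} (hz : ¬ (p:ℤ) ∣ z) : chi p (z : ℚ) = 0 := by
  simp [chi, padicValRat.of_int, padicValInt.eq_zero_of_not_dvd hz]

lemma zmod2_rot {a b c : ZMod 2} (h : a = b + c) : c = a + b := by
  revert h; revert a b c; decide

lemma zmod2_rot3 {a b c : ZMod 2} (h : a + b + c = 0) : c = a + b := by
  revert h; revert a b c; decide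

-- the master identities, as proven in s2 (copied)
lemma master1_chord {x1 y1 x2 y2 e L : ℚ}
    (h1 : y1 ^ 2 = x1 ^ 3 + 1292 * x1 ^ 2 - 1251948 * x1)
    (h2 : y2 ^ 2 = x2 ^ 3 + 1292 * x2 ^ 2 - 1251948 * x2)
    (he : e ^ 3 + 1292 * e ^ 2 - 1251948 * e = 0)
    (hL : L * (x1 - x2) = y1 - y2) (hx : x1 ≠ x2) :
    (x1 - e) * (x2 - e) * ((L ^ 2 - 1292 - x1 - x2) - e) = (L * (e - x1) + y1) ^ 2 := by
  have := sub_ne_zero.mpr hx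
  apply mul_right_cancel₀ this
  linear_combination (-(x1 - x2) - (e - x1)) * h1 + (e - x1) * h2 -
    ((y1 - L * (x1 - x2) + y2) * (e - x1)) * hL - (x1 - x2) * he

lemma master2_chord {x1 y1 x2 y2 e L : ℚ}
    (h1 : y1 ^ 2 = x1 ^ 3 + 1292 * x1 ^ 2 - 1251948 * x1)
    (h2 : y2 ^ 2 = x2 ^ 3 + 1292 * x2 ^ 2 - 1251948 * x2)
    (hL : L * (x1 - x2) = y1 - y2) (hx : x1 ≠ x2) :
    (3 * e ^ 2 + 2584 * e - 1251948) =
      ((e - x1) * (e - x2) + (e - x1) * (e - (L ^ 2 - 1292 - x1 - x2)) +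
        (e - x2) * (e - (L ^ 2 - 1292 - x1 - x2)) + 2 * (L * (e - x1) + y1) * L) := by
  have := sub_ne_zero.mpr hx
  apply mul_right_cancel₀ this
  linear_combination (-1 : ℚ) * h1 + h2 - (y1 - L * (x1 - x2) + y2) * hL

lemma master1_tangent {x1 y1 e L : ℚ}
    (h1 : y1 ^ 2 = x1 ^ 3 + 1292 * x1 ^ 2 - 1251948 * x1)
    (he : e ^ 3 + 1292 * e ^ 2 - 1251948 * e = 0)
    (hL : L * (2 * y1) = 3 * x1 ^ 2 + 2584 * x1 - 1251948) :
    (x1 - e) * (x1 - e) * ((L ^ 2 - 1292 - x1 - x1) - e) = (L * (e - x1) + y1) ^ 2 := by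
  linear_combination (-1 : ℚ) * h1 - (e - x1) * hL - he

lemma master2_tangent {x1 y1 e L : ℚ}
    (hL : L * (2 * y1) = 3 * x1 ^ 2 + 2584 * x1 - 1251948) :
    (3 * e ^ 2 + 2584 * e - 1251948) =
      ((e - x1) * (e - x1) + (e - x1) * (e - (L ^ 2 - 1292 - x1 - x1)) +
        (e - x1) * (e - (L ^ 2 - 1292 - x1 - x1)) + 2 * (L * (e - x1) + y1) * L) := by
  linear_combination (-1 : ℚ) * hL



lemma phi_cases {e x1 x2 y1 L : ℚ}
    (hc : (3 * e ^ 2 + 2584 * e - 1251948 : ℚ) ≠ 0)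
    (M1 : (x1 - e) * (x2 - e) * ((L ^ 2 - 1292 - x1 - x2) - e) = (L * (e - x1) + y1) ^ 2)
    (M2 : (3 * e ^ 2 + 2584 * e - 1251948 : ℚ) =
          ((e - x1) * (e - x2) + (e - x1) * (e - (L ^ 2 - 1292 - x1 - x2)) +
            (e - x2) * (e - (L ^ 2 - 1292 - x1 - x2)) + 2 * (L * (e - x1) + y1) * L)) :
    (if (L ^ 2 - 1292 - x1 - x2) = e then chi p (3 * e ^ 2 + 2584 * e - 1251948)
      else chi p ((L ^ 2 - 1292 - x1 - x2) - e)) =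
    (if x1 = e then chi p (3 * e ^ 2 + 2584 * e - 1251948) else chi p (x1 - e)) +
    (if x2 = e then chi p (3 * e ^ 2 + 2584 * e - 1251948) else chi p (x2 - e)) := by
  set x3 : ℚ := L ^ 2 - 1292 - x1 - x2 with hx3
  by_cases hx1e : x1 = e
  · have hline : L * (e - x1) + y1 = 0 := by
      have h0 : (L * (e - x1) + y1) ^ 2 = 0 := by rw [← M1, hx1e]; ring
      exact pow_eq_zero_iff two_ne_zero |>.mp h0
    have hM2' : (3 * e ^ 2 + 2584 * e - 1251948 : ℚ) = (e - x2) * (e - x3) := by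
      linear_combination M2 + 2 * L * hline - ((e - x2) + (e - x3)) * hx1e
    have hx2e : x2 ≠ e := fun h => hc (by rw [hM2', h]; ring)
    have hx3e : x3 ≠ e := fun h => hc (by rw [hM2', h]; ring)
    rw [if_pos hx1e, if_neg hx2e, if_neg hx3e]
    have hkey : chi p (3 * e ^ 2 + 2584 * e - 1251948) = chi p (x2 - e) + chi p (x3 - e) := by
      rw [hM2', show ((e - x2) * (e - x3) : ℚ) = (x2 - e) * (x3 - e) by ring,
        chi_mul (sub_ne_zero.mpr hx2e) (sub_ne_zero.mpr hx3e)]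
    exact zmod2_rot hkey
  · by_cases hx2e : x2 = e
    · have hline : L * (e - x1) + y1 = 0 := by
        have h0 : (L * (e - x1) + y1) ^ 2 = 0 := by rw [← M1, hx2e]; ring
        exact pow_eq_zero_iff two_ne_zero |>.mp h0
      have hM2' : (3 * e ^ 2 + 2584 * e - 1251948 : ℚ) = (e - x1) * (e - x3) := by
        linear_combination M2 + 2 * L * hline - ((e - x1) + (e - x3)) * hx2e
      have hx3e : x3 ≠ e := fun h => hc (by rw [hM2', h]; ring)
      rw [if_neg hx1e, if_pos hx2e, if_neg hx3e]
      have hkey : chi p (3 * e ^ 2 + 2584 * e - 1251948) = chi p (x1 - e) + chi p (x3 - e) := by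
        rw [hM2', show ((e - x1) * (e - x3) : ℚ) = (x1 - e) * (x3 - e) by ring,
          chi_mul (sub_ne_zero.mpr hx1e) (sub_ne_zero.mpr hx3e)]
      exact (zmod2_rot hkey).trans (add_comm _ _)
    · rw [if_neg hx1e, if_neg hx2e]
      by_cases hx3e : x3 = e
      · have hline : L * (e - x1) + y1 = 0 := by
          have h0 : (L * (e - x1) + y1) ^ 2 = 0 := by rw [← M1, hx3e]; ring
          exact pow_eq_zero_iff two_ne_zero |>.mp h0
        have hM2' : (3 * e ^ 2 + 2584 * e - 1251948 : ℚ) = (e - x1) * (e - x2) := by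
          linear_combination M2 + 2 * L * hline - ((e - x1) + (e - x2)) * hx3e
        rw [if_pos hx3e, hM2', show ((e - x1) * (e - x2) : ℚ) = (x1 - e) * (x2 - e) by ring,
          chi_mul (sub_ne_zero.mpr hx1e) (sub_ne_zero.mpr hx2e)]
      · rw [if_neg hx3e]
        have hline : (L * (e - x1) + y1) ≠ 0 := by
          intro h0
          rw [h0] at M1
          rcases mul_eq_zero.mp (by linarith [M1] : ((x1 - e) * (x2 - e)) * (x3 - e) = 0)
            with h | h
          · rcases mul_eq_zero.mp h with h' | h'
            · exact hx1e (by linarith)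
            · exact hx2e (by linarith)
          · exact hx3e (by linarith)
        have hkey : chi p (x1 - e) + chi p (x2 - e) + chi p (x3 - e) = 0 := by
          rw [← chi_mul (sub_ne_zero.mpr hx1e) (sub_ne_zero.mpr hx2e),
            ← chi_mul (mul_ne_zero (sub_ne_zero.mpr hx1e) (sub_ne_zero.mpr hx2e))
              (sub_ne_zero.mpr hx3e), M1, chi_sq hline]
        exact zmod2_rot3 hkey

theorem phi_add {e : ℚ} (he : e ^ 3 + 1292 * e ^ 2 - 1251948 * e = 0)
    (hc : (3 * e ^ 2 + 2584 * e - 1251948 : ℚ) ≠ 0)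
    (P Q : W.toAffine.Point) : phi p e (P + Q) = phi p e P + phi p e Q := by
  rcases P with _ | @⟨x1, y1, h1⟩
  · rw [← zero_def, zero_add, phi_zero, zero_add]
  rcases Q with _ | @⟨x2, y2, h2⟩
  · rw [← zero_def, add_zero, phi_zero, add_zero]
  have e1 := equation_W h1.1
  have e2 := equation_W h2.1
  by_cases hy : x1 = x2 ∧ y1 = W.toAffine.negY x2 y2
  · rw [add_of_Y_eq hy.1 hy.2, phi_zero, phi_some, phi_some, hy.1]
    exact (CharTwo.add_self_eq_zero _).symm
  · have hxy : x1 = x2 → y1 ≠ W.toAffine.negY x2 y2 := fun hx hy' => hy ⟨hx, hy'⟩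
    rw [add_some (fun h => hxy h.1 h.2), phi_some, phi_some, phi_some, addX_eq]
    by_cases hx : x1 = x2
    · have hy1 : y1 ≠ W.toAffine.negY x2 y2 := hxy hx
      have hyy : y1 = y2 := Y_eq_of_Y_ne h1.1 h2.1 hx hy1
      rw [negY_eq, ← hyy] at hy1
      have h2y : (2 * y1 : ℚ) ≠ 0 := by intro h; apply hy1; linarith
      have hL : (W.toAffine.slope x1 x2 y1 y2) * (2 * y1) =
          3 * x1 ^ 2 + 2584 * x1 - 1251948 := by
        rw [slope_of_Y_ne hx (by rw [negY_eq, ← hyy]; exact hy1)]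
        rw [negY_eq, Wa1, Wa2, Wa4]
        rw [div_mul_eq_mul_div, div_eq_iff (by intro h; apply h2y; linarith)]
        ring
      subst hx
      exact phi_cases hc (master1_tangent e1 he hL) (master2_tangent hL)
    · have hL : (W.toAffine.slope x1 x2 y1 y2) * (x1 - x2) = y1 - y2 := by
        rw [slope_of_X_ne hx, div_mul_cancel₀ _ (sub_ne_zero.mpr hx)]
      exact phi_cases hc (master1_chord e1 e2 he hL hx) (master2_chord e1 e2 hL hx)

-- Fact instances
instance f3 : Fact (Nat.Prime 3) := ⟨by norm_num⟩
instance f17 : Fact (Nat.Prime 17) := ⟨by norm_num⟩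
instance f19 : Fact (Nat.Prime 19) := ⟨by norm_num⟩

lemma chi_calc0 {u : ℤ} {s q : ℚ} (hs : s ≠ 0) (hu : ¬ (p:ℤ) ∣ u) (hq : q = s ^ 2 * (u : ℚ)) :
    chi p q = 0 := by
  have hu0 : (u : ℚ) ≠ 0 := by
    intro h; exact hu (by simp [show u = 0 from by exact_mod_cast h])
  rw [hq, chi_mul (pow_ne_zero 2 hs) hu0, chi_sq hs, zero_add, chi_int hu]

lemma chi_calc1 {u : ℤ} {s q : ℚ} (hs : s ≠ 0) (hu : ¬ (p:ℤ) ∣ u) (hq : q = s ^ 2 * (u * p)) :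
    chi p q = 1 := by
  have hp : ((p : ℚ)) ≠ 0 := by
    have := (Fact.out : p.Prime).pos; positivity
  have hu0 : (u : ℚ) ≠ 0 := by
    intro h; exact hu (by simp [show u = 0 from by exact_mod_cast h])
  rw [hq, chi_mul (pow_ne_zero 2 hs) (mul_ne_zero hu0 hp), chi_sq hs, zero_add,
    chi_mul hu0 hp, chi_int hu, chi_self, zero_add]

-- nonsingular points
lemma nsP : W.toAffine.Nonsingular (-722) 34656 := by
  rw [nonsingular_iff, equation_iff]; norm_num [W]
lemma nsQ : W.toAffine.Nonsingular 6137 521645 := by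
  rw [nonsingular_iff, equation_iff]; norm_num [W]
lemma nsR : W.toAffine.Nonsingular (-1216) 40432 := by
  rw [nonsingular_iff, equation_iff]; norm_num [W]
lemma nsT0 : W.toAffine.Nonsingular 0 0 := by
  rw [nonsingular_iff, equation_iff]; norm_num [W]
lemma nsT1 : W.toAffine.Nonsingular 646 0 := by
  rw [nonsingular_iff, equation_iff]; norm_num [W]
lemma nsT2 : W.toAffine.Nonsingular (-1938) 0 := by
  rw [nonsingular_iff, equation_iff]; norm_num [W]

noncomputable def PP : W.toAffine.Point := .some _ _ nsP
noncomputable def QQ : W.toAffine.Point := .some _ _ nsQ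
noncomputable def RR : W.toAffine.Point := .some _ _ nsR
noncomputable def T0 : W.toAffine.Point := .some _ _ nsT0
noncomputable def T1 : W.toAffine.Point := .some _ _ nsT1
noncomputable def T2 : W.toAffine.Point := .some _ _ nsT2

lemma two_torsion {S : W.toAffine.Point} (h : S + S = 0) :
    S = 0 ∨ S = T0 ∨ S = T1 ∨ S = T2 := by
  rcases S with _ | @⟨x, y, hS⟩
  · left; rfl
  right
  have hy : y = W.toAffine.negY x y := by
    by_contra hy
    exact some_ne_zero _ ((add_self_of_Y_ne hy) ▸ h)
  rw [negY_eq] at hy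
  have hy0 : y = 0 := by linarith
  subst hy0
  have heq := equation_W hS.1
  have hfac : x * ((x - 646) * (x + 1938)) = 0 := by linarith
  rcases mul_eq_zero.mp hfac with h0 | h1
  · left; subst h0; rfl
  · rcases mul_eq_zero.mp h1 with h2 | h3
    · right; left
      have : x = 646 := by linarith
      subst this; rfl
    · right; right
      have : x = -1938 := by linarith
      subst this; rfl

lemma val_c1_PP : phi 2 0 PP = 1 := by
  rw [PP, phi_some, if_neg (by norm_num)]
  exact chi_calc1 (p := 2) (s := 19) (u := -1) (by norm_num) (by decide) (by push_cast; norm_num)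

lemma val_c1_QQ : phi 2 0 QQ = 0 := by
  rw [QQ, phi_some, if_neg (by norm_num)]
  exact chi_calc0 (p := 2) (s := 1) (u := 6137) (by norm_num) (by decide) (by push_cast; norm_num)

lemma val_c1_RR : phi 2 0 RR = 0 := by
  rw [RR, phi_some, if_neg (by norm_num)]
  exact chi_calc0 (p := 2) (s := 8) (u := -19) (by norm_num) (by decide) (by push_cast; norm_num)

lemma val_c1_T0 : phi 2 0 T0 = 0 := by
  rw [T0, phi_some, if_pos rfl]
  exact chi_calc0 (p := 2) (s := 646) (u := -3) (by norm_num) (by decide) (by push_cast; norm_num)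

lemma val_c1_T1 : phi 2 0 T1 = 1 := by
  rw [T1, phi_some, if_neg (by norm_num)]
  exact chi_calc1 (p := 2) (s := 1) (u := 323) (by norm_num) (by decide) (by push_cast; norm_num)

lemma val_c1_T2 : phi 2 0 T2 = 1 := by
  rw [T2, phi_some, if_neg (by norm_num)]
  exact chi_calc1 (p := 2) (s := 1) (u := -969) (by norm_num) (by decide) (by push_cast; norm_num)

lemma val_c2_PP : phi 3 0 PP = 0 := by
  rw [PP, phi_some, if_neg (by norm_num)]
  exact chi_calc0 (p := 3) (s := 1) (u := -722) (by norm_num) (by decide) (by push_cast; norm_num)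

lemma val_c2_QQ : phi 3 0 QQ = 0 := by
  rw [QQ, phi_some, if_neg (by norm_num)]
  exact chi_calc0 (p := 3) (s := 1) (u := 6137) (by norm_num) (by decide) (by push_cast; norm_num)

lemma val_c2_RR : phi 3 0 RR = 0 := by
  rw [RR, phi_some, if_neg (by norm_num)]
  exact chi_calc0 (p := 3) (s := 1) (u := -1216) (by norm_num) (by decide) (by push_cast; norm_num)

lemma val_c2_T0 : phi 3 0 T0 = 1 := by
  rw [T0, phi_some, if_pos rfl]
  exact chi_calc1 (p := 3) (s := 646) (u := -1) (by norm_num) (by decide) (by push_cast; norm_num)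

lemma val_c2_T1 : phi 3 0 T1 = 0 := by
  rw [T1, phi_some, if_neg (by norm_num)]
  exact chi_calc0 (p := 3) (s := 1) (u := 646) (by norm_num) (by decide) (by push_cast; norm_num)

lemma val_c2_T2 : phi 3 0 T2 = 1 := by
  rw [T2, phi_some, if_neg (by norm_num)]
  exact chi_calc1 (p := 3) (s := 1) (u := -646) (by norm_num) (by decide) (by push_cast; norm_num)

lemma val_c3_PP : phi 17 0 PP = 0 := by
  rw [PP, phi_some, if_neg (by norm_num)]
  exact chi_calc0 (p := 17) (s := 19) (u := -2) (by norm_num) (by decide) (by push_cast; norm_num)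

lemma val_c3_QQ : phi 17 0 QQ = 1 := by
  rw [QQ, phi_some, if_neg (by norm_num)]
  exact chi_calc1 (p := 17) (s := 19) (u := 1) (by norm_num) (by decide) (by push_cast; norm_num)

lemma val_c3_RR : phi 17 0 RR = 0 := by
  rw [RR, phi_some, if_neg (by norm_num)]
  exact chi_calc0 (p := 17) (s := 1) (u := -1216) (by norm_num) (by decide) (by push_cast; norm_num)

lemma val_c3_T0 : phi 17 0 T0 = 0 := by
  rw [T0, phi_some, if_pos rfl]
  exact chi_calc0 (p := 17) (s := 646) (u := -3) (by norm_num) (by decide) (by push_cast; norm_num)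

lemma val_c3_T1 : phi 17 0 T1 = 1 := by
  rw [T1, phi_some, if_neg (by norm_num)]
  exact chi_calc1 (p := 17) (s := 1) (u := 38) (by norm_num) (by decide) (by push_cast; norm_num)

lemma val_c3_T2 : phi 17 0 T2 = 1 := by
  rw [T2, phi_some, if_neg (by norm_num)]
  exact chi_calc1 (p := 17) (s := 1) (u := -114) (by norm_num) (by decide) (by push_cast; norm_num)

lemma val_c4_PP : phi 19 0 PP = 0 := by
  rw [PP, phi_some, if_neg (by norm_num)]
  exact chi_calc0 (p := 19) (s := 19) (u := -2) (by norm_num) (by decide) (by push_cast; norm_num)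

lemma val_c4_QQ : phi 19 0 QQ = 0 := by
  rw [QQ, phi_some, if_neg (by norm_num)]
  exact chi_calc0 (p := 19) (s := 19) (u := 17) (by norm_num) (by decide) (by push_cast; norm_num)

lemma val_c4_RR : phi 19 0 RR = 1 := by
  rw [RR, phi_some, if_neg (by norm_num)]
  exact chi_calc1 (p := 19) (s := 8) (u := -1) (by norm_num) (by decide) (by push_cast; norm_num)

lemma val_c4_T0 : phi 19 0 T0 = 0 := by
  rw [T0, phi_some, if_pos rfl]
  exact chi_calc0 (p := 19) (s := 646) (u := -3) (by norm_num) (by decide) (by push_cast; norm_num)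

lemma val_c4_T1 : phi 19 0 T1 = 1 := by
  rw [T1, phi_some, if_neg (by norm_num)]
  exact chi_calc1 (p := 19) (s := 1) (u := 34) (by norm_num) (by decide) (by push_cast; norm_num)

lemma val_c4_T2 : phi 19 0 T2 = 1 := by
  rw [T2, phi_some, if_neg (by norm_num)]
  exact chi_calc1 (p := 19) (s := 1) (u := -102) (by norm_num) (by decide) (by push_cast; norm_num)

lemma val_c5_PP : phi 19 646 PP = 1 := by
  rw [PP, phi_some, if_neg (by norm_num)]
  exact chi_calc1 (p := 19) (s := 6) (u := -2) (by norm_num) (by decide) (by push_cast; norm_num)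

lemma val_c5_QQ : phi 19 646 QQ = 1 := by
  rw [QQ, phi_some, if_neg (by norm_num)]
  exact chi_calc1 (p := 19) (s := 17) (u := 1) (by norm_num) (by decide) (by push_cast; norm_num)

lemma val_c5_RR : phi 19 646 RR = 1 := by
  rw [RR, phi_some, if_neg (by norm_num)]
  exact chi_calc1 (p := 19) (s := 7) (u := -2) (by norm_num) (by decide) (by push_cast; norm_num)

lemma val_c5_T0 : phi 19 646 T0 = 1 := by
  rw [T0, phi_some, if_neg (by norm_num)]
  exact chi_calc1 (p := 19) (s := 1) (u := -34) (by norm_num) (by decide) (by push_cast; norm_num)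

lemma val_c5_T1 : phi 19 646 T1 = 0 := by
  rw [T1, phi_some, if_pos rfl]
  exact chi_calc0 (p := 19) (s := 1292) (u := 1) (by norm_num) (by decide) (by push_cast; norm_num)

lemma val_c5_T2 : phi 19 646 T2 = 1 := by
  rw [T2, phi_some, if_neg (by norm_num)]
  exact chi_calc1 (p := 19) (s := 1) (u := -136) (by norm_num) (by decide) (by push_cast; norm_num)

lemma phi_comb {p : ℕ} [Fact p.Prime] {e : ℚ} (he : e ^ 3 + 1292 * e ^ 2 - 1251948 * e = 0)
    (hc : (3 * e ^ 2 + 2584 * e - 1251948 : ℚ) ≠ 0) {a b c : ℤ}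
    {X Y Z T : W.toAffine.Point} (h : a • X + b • Y + c • Z = T) :
    (a : ZMod 2) * phi p e X + (b : ZMod 2) * phi p e Y + (c : ZMod 2) * phi p e Z =
      phi p e T := by
  have h' := congrArg (AddMonoidHom.mk' (phi p e) (phi_add he hc)) h
  simpa only [map_add, map_zsmul, zsmul_eq_mul, AddMonoidHom.mk'_apply] using h'

lemma he0 : (0 : ℚ) ^ 3 + 1292 * 0 ^ 2 - 1251948 * 0 = 0 := by norm_num
lemma hc0 : (3 * (0:ℚ) ^ 2 + 2584 * 0 - 1251948 : ℚ) ≠ 0 := by norm_num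
lemma he6 : (646 : ℚ) ^ 3 + 1292 * 646 ^ 2 - 1251948 * 646 = 0 := by norm_num
lemma hc6 : (3 * (646:ℚ) ^ 2 + 2584 * 646 - 1251948 : ℚ) ≠ 0 := by norm_num

lemma halve {a b c : ℤ} (h : a • PP + b • QQ + c • RR = 0) :
    ∃ a' b' c' : ℤ, a = 2 * a' ∧ b = 2 * b' ∧ c = 2 * c' ∧
      a' • PP + b' • QQ + c' • RR = 0 := by
  have h1 := phi_comb (p := 2) he0 hc0 h
  rw [val_c1_PP, val_c1_QQ, val_c1_RR, phi_zero] at h1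
  have h3 := phi_comb (p := 17) he0 hc0 h
  rw [val_c3_PP, val_c3_QQ, val_c3_RR, phi_zero] at h3
  have h4 := phi_comb (p := 19) he0 hc0 h
  rw [val_c4_PP, val_c4_QQ, val_c4_RR, phi_zero] at h4
  have ha : (2 : ℤ) ∣ a := by
    exact_mod_cast (ZMod.intCast_zmod_eq_zero_iff_dvd a 2).mp (by simpa using h1)
  have hb : (2 : ℤ) ∣ b := by
    exact_mod_cast (ZMod.intCast_zmod_eq_zero_iff_dvd b 2).mp (by simpa using h3)
  have hc : (2 : ℤ) ∣ c := by
    exact_mod_cast (ZMod.intCast_zmod_eq_zero_iff_dvd c 2).mp (by simpa using h4)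
  obtain ⟨a', ha'⟩ := ha
  obtain ⟨b', hb'⟩ := hb
  obtain ⟨c', hc'⟩ := hc
  refine ⟨a', b', c', ha', hb', hc', ?_⟩
  have hSS : (a' • PP + b' • QQ + c' • RR) + (a' • PP + b' • QQ + c' • RR) = 0 := by
    rw [← h, ha', hb', hc', mul_smul, mul_smul, mul_smul, two_zsmul, two_zsmul, two_zsmul]
    abel
  rcases two_torsion hSS with h0 | hT0 | hT1 | hT2
  · exact h0
  · exfalso
    have h2 := phi_comb (p := 3) he0 hc0 hT0
    rw [val_c2_PP, val_c2_QQ, val_c2_RR, val_c2_T0] at h2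
    simp at h2
  · exfalso
    have g1 := phi_comb (p := 2) he0 hc0 hT1
    rw [val_c1_PP, val_c1_QQ, val_c1_RR, val_c1_T1] at g1
    have g3 := phi_comb (p := 17) he0 hc0 hT1
    rw [val_c3_PP, val_c3_QQ, val_c3_RR, val_c3_T1] at g3
    have g4 := phi_comb (p := 19) he0 hc0 hT1
    rw [val_c4_PP, val_c4_QQ, val_c4_RR, val_c4_T1] at g4
    have g5 := phi_comb (p := 19) he6 hc6 hT1
    rw [val_c5_PP, val_c5_QQ, val_c5_RR, val_c5_T1] at g5
    have ea : (a' : ZMod 2) = 1 := by simpa using g1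
    have eb : (b' : ZMod 2) = 1 := by simpa using g3
    have ec : (c' : ZMod 2) = 1 := by simpa using g4
    rw [ea, eb, ec] at g5
    simp at g5
    exact absurd g5 (by decide)
  · exfalso
    have h2 := phi_comb (p := 3) he0 hc0 hT2
    rw [val_c2_PP, val_c2_QQ, val_c2_RR, val_c2_T2] at h2
    simp at h2

lemma all_pow_two {a b c : ℤ} (h : a • PP + b • QQ + c • RR = 0) :
    ∀ n : ℕ, (2:ℤ) ^ n ∣ a ∧ (2:ℤ) ^ n ∣ b ∧ (2:ℤ) ^ n ∣ c := by
  intro n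
  induction n generalizing a b c h with
  | zero => simp
  | succ n ih =>
    obtain ⟨a', b', c', ha, hb, hc, h'⟩ := halve h
    obtain ⟨da, db, dc⟩ := ih h'
    refine ⟨?_, ?_, ?_⟩
    · rw [ha, pow_succ, mul_comm ((2:ℤ)^n) 2]; exact mul_dvd_mul_left 2 da
    · rw [hb, pow_succ, mul_comm ((2:ℤ)^n) 2]; exact mul_dvd_mul_left 2 db
    · rw [hc, pow_succ, mul_comm ((2:ℤ)^n) 2]; exact mul_dvd_mul_left 2 dc

lemma zero_of_all_pow {a : ℤ} (h : ∀ n : ℕ, (2:ℤ) ^ n ∣ a) : a = 0 := by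
  by_contra ha
  have h1 : (2:ℤ) ^ a.natAbs ≤ |a| :=
    Int.le_of_dvd (abs_pos.mpr ha) ((dvd_abs _ _).mpr (h a.natAbs))
  have h2 : (a.natAbs : ℤ) < 2 ^ a.natAbs := by
    exact_mod_cast Nat.lt_two_pow_self (n := a.natAbs)
  rw [Int.abs_eq_natAbs] at h1
  push_cast at h1 h2
  linarith

/-- The points `(−722, 34656)`, `(6137, 521645)`, `(−1216, 40432)` are
`ℤ`-linearly independent in `E(ℚ)`, i.e. they generate a subgroup of rank `3`;
in particular the Mordell–Weil rank of `E(ℚ)` is at least `3`. -/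
theorem rank_at_least_three :
    ∃ (h1 : W.toAffine.Nonsingular (-722) 34656)
      (h2 : W.toAffine.Nonsingular 6137 521645)
      (h3 : W.toAffine.Nonsingular (-1216) 40432),
      ∀ a b c : ℤ,
        a • (WeierstrassCurve.Affine.Point.some _ _ h1) +
        b • (WeierstrassCurve.Affine.Point.some _ _ h2) +
        c • (WeierstrassCurve.Affine.Point.some _ _ h3) = 0 →
        a = 0 ∧ b = 0 ∧ c = 0 := by
  refine ⟨nsP, nsQ, nsR, fun a b c h => ?_⟩
  have h' : a • PP + b • QQ + c • RR = 0 := h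
  exact ⟨zero_of_all_pow (fun n => (all_pow_two h' n).1),
    zero_of_all_pow (fun n => (all_pow_two h' n).2.1),
    zero_of_all_pow (fun n => (all_pow_two h' n).2.2)⟩
end

section
/- Let p, q be positive integers with gcd(p,q) = 1, and let m = pq(p+q)(2rq + p(r−s)). Then the squarefree part n of m is a θ-congruent number, where cos θ = s/r with 0 ≤ |s| < r and gcd(r,s) = 1. -/
/-- `n` is a `θ`-congruent number, where `cos θ = s / r`: there is a triangle with
positive rational sides `a`, `b`, `c`, with angle `θ` between `a` and `b`
(`c² = a² + b² − 2ab·(s/r)`) and area `n·√(r² − s²)` (equivalently `ab = 2nr`). -/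
def IsThetaCongruent (r s : ℤ) (n : ℤ) : Prop :=
  ∃ a b c : ℚ, 0 < a ∧ 0 < b ∧ 0 < c ∧
    c ^ 2 = a ^ 2 + b ^ 2 - 2 * a * b * ((s : ℚ) / (r : ℚ)) ∧
    a * b = 2 * (n : ℚ) * (r : ℚ)

/-- (Kan) If `m = pq(p+q)(2rq + p(r−s))` with `p, q` coprime positive integers,
then the squarefree part `n` of `m` (i.e. the squarefree `n` with `m = n·t²`)
is a `θ`-congruent number. -/
theorem squarefree_part_is_theta_congruent (r s : ℤ) (hsr : |s| < r)
    (hgcd : Int.gcd r s = 1) (p q : ℤ) (hp : 0 < p) (hq : 0 < q)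
    (hpq : Int.gcd p q = 1) (n t : ℤ) (hn : 0 < n) (ht : 0 < t)
    (hsf : Squarefree n)
    (hm : p * q * (p + q) * (2 * r * q + p * (r - s)) = n * t ^ 2) :
    IsThetaCongruent r s n := by
  have hr : (0:ℤ) < r := lt_of_le_of_lt (abs_nonneg s) hsr
  have hrs : (0:ℤ) < r - s := sub_pos.mpr (lt_of_le_of_lt (le_abs_self s) hsr)
  have hrQ : ((r:ℚ)) ≠ 0 := by exact_mod_cast hr.ne'
  have htQ : ((t:ℚ)) ≠ 0 := by exact_mod_cast ht.ne'
  refine ⟨(p*(2*r*q+p*(r-s)) : ℤ)/(t:ℚ), (2*r*q*(p+q) : ℤ)/(t:ℚ),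
    ((r-s)*p^2+2*(r-s)*p*q+2*r*q^2 : ℤ)/(t:ℚ), ?_, ?_, ?_, ?_, ?_⟩
  · apply div_pos
    · exact_mod_cast mul_pos hp (by positivity)
    · exact_mod_cast ht
  · apply div_pos
    · exact_mod_cast (by positivity : (0:ℤ) < 2*r*q*(p+q))
    · exact_mod_cast ht
  · apply div_pos
    · exact_mod_cast (by positivity : (0:ℤ) < (r-s)*p^2+2*(r-s)*p*q+2*r*q^2)
    · exact_mod_cast ht
  · push_cast
    field_simp
    ring
  · have hmQ : ((p:ℚ)) * q * (p + q) * (2 * r * q + p * (r - s)) = n * t ^ 2 := by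
      exact_mod_cast congrArg (Int.cast : ℤ → ℚ) hm
    push_cast
    field_simp
    linear_combination hmQ
end
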